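/- Let X be a finite set and let i, r : X → X be involutions. For every ir class C of X, exactly one of the following holds: (a) C is a singleton {x} with i(x) = x and r(x) = x; (b) C has at least two elements and there are exactly two elements z ∈ C satisfying i(z) = z or r(z) = z; (c) no element z ∈ C satisfies i(z) = z or r(z) = z, and the cardinality of C is even. -/

import Mathlib

/-- The relation generated by introduction/removal partners: `a` is related to `b`
if `b` is the `i`-partner or the `r`-partner of `a`. -/
def irRel {X : Type*} (i r : X → X) : X → X → Prop :=
  fun a b => i a = b ∨ r a = b

/-- The ir class of `x`: the equivalence class of `x` under the equivalence relation
generated by `x ∼ i x` and `x ∼ r x`. -/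
def irClass {X : Type*} (i r : X → X) (x : X) : Set X :=
  {y | Relation.EqvGen (irRel i r) x y}


open Equiv Function Relation Set

section IR

variable {X : Type*} {i r : X → X}

/-- The permutation `r ∘ i`. -/
def irf (hi : Function.Involutive i) (hr : Function.Involutive r) : Equiv.Perm X :=
  hr.toPerm * hi.toPerm

variable (hi : Function.Involutive i) (hr : Function.Involutive r)

lemma irf_apply (z : X) : irf hi hr z = r (i z) := rfl

lemma toPerm_inv : (hi.toPerm)⁻¹ = hi.toPerm := by
  ext z; simp [Equiv.Perm.inv_def]

lemma key_i : hi.toPerm * irf hi hr * (hi.toPerm)⁻¹ = (irf hi hr)⁻¹ := by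
  rw [toPerm_inv]
  ext z
  show i (r (i (i z))) = (irf hi hr)⁻¹ z
  rw [hi z, eq_comm, Equiv.Perm.inv_eq_iff_eq, irf_apply, hi, hr]

lemma key_r : hr.toPerm * irf hi hr * (hr.toPerm)⁻¹ = (irf hi hr)⁻¹ := by
  rw [toPerm_inv]
  ext z
  show r (r (i (r z))) = (irf hi hr)⁻¹ z
  rw [hr, eq_comm, Equiv.Perm.inv_eq_iff_eq, irf_apply, hi, hr]

lemma conj_i (n : ℤ) (z : X) :
    i ((irf hi hr ^ n) z) = ((irf hi hr) ^ (-n)) (i z) := by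
  have h : hi.toPerm * (irf hi hr) ^ n * (hi.toPerm)⁻¹ = (irf hi hr) ^ (-n) := by
    rw [← conj_zpow, key_i, inv_zpow, zpow_neg]
  have := congrFun (congrArg (fun g : Equiv.Perm X => (g : X → X)) h) (i z)
  simpa [toPerm_inv hi, Equiv.Perm.mul_apply, hi z] using this
  
lemma conj_r (n : ℤ) (z : X) :
    r ((irf hi hr ^ n) z) = ((irf hi hr) ^ (-n)) (r z) := by
  have h : hr.toPerm * (irf hi hr) ^ n * (hr.toPerm)⁻¹ = (irf hi hr) ^ (-n) := by
    rw [← conj_zpow, key_r, inv_zpow, zpow_neg]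
  have := congrFun (congrArg (fun g : Equiv.Perm X => (g : X → X)) h) (r z)
  simpa [toPerm_inv hr, Equiv.Perm.mul_apply, hr z] using this

lemma rx_eq (x : X) : r x = irf hi hr (i x) := by
  rw [irf_apply, hi]

lemma sc_i {u v : X} (h : (irf hi hr).SameCycle u v) :
    (irf hi hr).SameCycle (i u) (i v) := by
  obtain ⟨n, hn⟩ := h
  exact ⟨-n, by rw [← conj_i, hn]⟩

/-- description of the class as a union of two cycles -/
lemma irClass_eq (x : X) :
    irClass i r x =
      {y | (irf hi hr).SameCycle x y} ∪ {y | (irf hi hr).SameCycle (i x) y} := by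
  set f := irf hi hr with hf
  set R : X → X → Prop := fun a b => f.SameCycle a b ∨ f.SameCycle (i a) b with hR
  have hequiv : Equivalence R := by
    constructor
    · intro a; exact Or.inl (Equiv.Perm.SameCycle.refl f a)
    · rintro a b (h | h)
      · exact Or.inl h.symm
      · right
        have := (sc_i hi hr h).symm
        rwa [hi] at this
    · rintro a b c (h1 | h1) (h2 | h2)
      · exact Or.inl (h1.trans h2)
      · right
        exact ((sc_i hi hr h1).trans h2)
      · exact Or.inr (h1.trans h2)
      · left
        have := sc_i hi hr h1
        rw [hi] at this
        exact this.trans h2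
  have hsub1 : ∀ a b, irRel i r a b → R a b := by
    rintro a b (h | h)
    · exact Or.inr (h ▸ Equiv.Perm.SameCycle.refl f (i a))
    · exact Or.inr ⟨1, by rw [zpow_one, ← rx_eq hi hr, h]⟩
  have hzn : ∀ (a : X) (n : ℤ), Relation.EqvGen (irRel i r) a ((f ^ n) a) := by
    intro a n
    induction n using Int.induction_on with
    | zero => simpa using Relation.EqvGen.refl a
    | succ n ih =>
        have step : Relation.EqvGen (irRel i r) ((f ^ (n:ℤ)) a) ((f ^ ((n:ℤ)+1)) a) := by
          have h1 : Relation.EqvGen (irRel i r) ((f ^ (n:ℤ)) a) (i ((f ^ (n:ℤ)) a)) :=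
            Relation.EqvGen.rel _ _ (Or.inl rfl)
          have h2 : Relation.EqvGen (irRel i r) (i ((f ^ (n:ℤ)) a)) (r (i ((f ^ (n:ℤ)) a))) :=
            Relation.EqvGen.rel _ _ (Or.inr rfl)
          have h3 : (f ^ ((n:ℤ)+1)) a = r (i ((f ^ (n:ℤ)) a)) := by
            rw [show (n:ℤ)+1 = 1+(n:ℤ) by ring, zpow_add, zpow_one, Equiv.Perm.mul_apply]
            rfl
          rw [h3]
          exact h1.trans _ _ _ h2
        exact ih.trans _ _ _ step
    | pred n ih =>
        have step : Relation.EqvGen (irRel i r) ((f ^ (-(n:ℤ))) a) ((f ^ (-(n:ℤ)-1)) a) := by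
          have h1 : Relation.EqvGen (irRel i r) ((f ^ (-(n:ℤ))) a) (r ((f ^ (-(n:ℤ))) a)) :=
            Relation.EqvGen.rel _ _ (Or.inr rfl)
          have h2 : Relation.EqvGen (irRel i r) (r ((f ^ (-(n:ℤ))) a)) (i (r ((f ^ (-(n:ℤ))) a))) :=
            Relation.EqvGen.rel _ _ (Or.inl rfl)
          have h3 : (f ^ (-(n:ℤ)-1)) a = i (r ((f ^ (-(n:ℤ))) a)) := by
            have : f (i (r ((f ^ (-(n:ℤ))) a))) = (f ^ (-(n:ℤ))) a := by
              rw [irf_apply, hi, hr]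
            have h4 := congrArg (fun w => f⁻¹ w) this
            simp only [show ∀ y, f⁻¹ (f y) = y from fun y => f.symm_apply_apply y] at h4
            rw [h4, show -(n:ℤ)-1 = -1 + -(n:ℤ) by ring, zpow_add, Equiv.Perm.mul_apply,
              zpow_neg_one]
          rw [h3]
          exact h1.trans _ _ _ h2
        exact ih.trans _ _ _ step
  have hsub2 : ∀ a b, R a b → Relation.EqvGen (irRel i r) a b := by
    rintro a b (⟨n, hn⟩ | ⟨n, hn⟩)
    · exact hn ▸ hzn a n
    · have h1 : Relation.EqvGen (irRel i r) a (i a) := Relation.EqvGen.rel _ _ (Or.inl rfl)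
      exact h1.trans _ _ _ (hn ▸ hzn (i a) n)
  ext y
  constructor
  · intro h
    exact (hequiv.eqvGen_iff).mp (Relation.EqvGen.mono hsub1 _ _ h)
  · intro h
    exact hsub2 x y h

end IR


lemma zmod_natCast_val' {m : ℕ} [NeZero m] (k : ZMod m) : ((k.val : ℕ) : ZMod m) = k := by
  rw [ZMod.natCast_val, ZMod.cast_id]

lemma two_t_zero {t : ℕ} : (2 : ZMod (2*t)) * (t : ZMod (2*t)) = 0 := by
  have h0 : ((2*t : ℕ) : ZMod (2*t)) = 0 := ZMod.natCast_self _
  push_cast at h0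
  linear_combination h0

lemma two_mul_eq_zero_iff {t : ℕ} (ht : 0 < t) (z : ZMod (2*t)) :
    2 * z = 0 ↔ z = 0 ∨ z = (t : ZMod (2*t)) := by
  haveI : NeZero (2*t) := ⟨by omega⟩
  constructor
  · intro h
    have h' : z + z = 0 := by linear_combination h
    have hv : (z.val + z.val) % (2*t) = 0 := by
      have := congrArg ZMod.val h'
      rwa [ZMod.val_add, ZMod.val_zero] at this
    have hdvd : 2*t ∣ 2 * z.val := by
      have := Nat.dvd_of_mod_eq_zero hv
      rwa [← two_mul] at this
    have hdvd' : t ∣ z.val := by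
      rcases hdvd with ⟨q, hq⟩
      rw [mul_assoc] at hq
      exact ⟨q, Nat.eq_of_mul_eq_mul_left (by norm_num) hq⟩
    obtain ⟨q, hq⟩ := hdvd'
    have hlt := z.val_lt
    have hq2 : q = 0 ∨ q = 1 := by
      rcases Nat.lt_or_ge q 2 with h2 | h2
      · omega
      · exfalso; nlinarith
    rcases hq2 with rfl | rfl
    · left
      rw [← ZMod.val_eq_zero]; omega
    · right
      rw [← zmod_natCast_val' z, hq]
      norm_num
  · rintro (rfl | rfl)
    · ring
    · exact two_t_zero

lemma double_eq_iff {t : ℕ} (ht : 0 < t) (c k : ZMod (2*t)) (h2 : 2 ∣ c.val) :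
    2 * k = c ↔ (k = ((c.val/2 : ℕ) : ZMod (2*t)) ∨ k = ((c.val/2 : ℕ) : ZMod (2*t)) + (t : ZMod (2*t))) := by
  haveI : NeZero (2*t) := ⟨by omega⟩
  have hd : 2 * ((c.val/2 : ℕ) : ZMod (2*t)) = c := by
    have h0 : ((2 * (c.val/2) : ℕ) : ZMod (2*t)) = ((c.val : ℕ) : ZMod (2*t)) := by
      rw [Nat.mul_div_cancel' h2]
    push_cast at h0
    rw [zmod_natCast_val'] at h0
    linear_combination h0
  constructor
  · intro h
    have : 2 * (k - ((c.val/2 : ℕ) : ZMod (2*t))) = 0 := by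
      rw [mul_sub, h, hd, sub_self]
    rcases (two_mul_eq_zero_iff ht _).mp this with h0 | h0
    · left; linear_combination h0
    · right; linear_combination h0
  · rintro (rfl | rfl)
    · exact hd
    · rw [mul_add, hd, two_t_zero, add_zero]

lemma double_ne {t : ℕ} (ht : 0 < t) (c k : ZMod (2*t)) (h2 : ¬ 2 ∣ c.val) :
    2 * k ≠ c := by
  haveI : NeZero (2*t) := ⟨by omega⟩
  intro h
  apply h2
  have : c.val = (k.val + k.val) % (2*t) := by
    rw [← ZMod.val_add, ← two_mul, h]
  rw [this]
  rw [Nat.dvd_mod_iff ⟨t, rfl⟩]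
  omega

lemma val_parity_alt {m : ℕ} (hm : 2 ≤ m) (hme : 2 ∣ m) (c : ZMod m) :
    (2 ∣ c.val ∧ ¬ 2 ∣ (c+1).val) ∨ (¬ 2 ∣ c.val ∧ 2 ∣ (c+1).val) := by
  haveI : NeZero m := ⟨by omega⟩
  haveI : Fact (1 < m) := ⟨hm⟩
  have h1 : (c + 1).val = (c.val + 1) % m := by
    rw [ZMod.val_add, ZMod.val_one]
  have hlt := c.val_lt
  rcases Nat.lt_or_ge (c.val + 1) m with h | h
  · rw [h1, Nat.mod_eq_of_lt h]
    omega
  · have hcv : c.val + 1 = m := by omega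
    rw [h1, hcv, Nat.mod_self]
    omega

theorem sol_ncard {m : ℕ} (hm : 2 ≤ m) (c : ZMod m) :
    ({k : ZMod m | 2*k = c ∨ 2*k = c + 1}).ncard = 2 := by
  haveI : NeZero m := ⟨by omega⟩
  haveI : Fact (1 < m) := ⟨hm⟩
  rcases Nat.even_or_odd m with he | ho
  · -- m even
    obtain ⟨t', ht'⟩ := he
    obtain ⟨t, rfl⟩ : ∃ t, m = 2 * t := ⟨t', by omega⟩
    have ht : 0 < t := by omega
    have htne : (t : ZMod (2*t)) ≠ 0 := by
      rw [Ne, ZMod.natCast_eq_zero_iff]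
      intro hdvd
      have := Nat.le_of_dvd ht hdvd
      omega
    rcases val_parity_alt hm ⟨t, rfl⟩ c with ⟨hc, hc1⟩ | ⟨hc, hc1⟩
    · have : {k : ZMod (2*t) | 2*k = c ∨ 2*k = c + 1}
          = {((c.val/2 : ℕ) : ZMod (2*t)), ((c.val/2 : ℕ) : ZMod (2*t)) + (t : ZMod (2*t))} := by
        ext k
        simp only [mem_setOf_eq, mem_insert_iff, mem_singleton_iff]
        constructor
        · rintro (h | h)
          · exact (double_eq_iff ht c k hc).mp h
          · exact absurd h (double_ne ht (c+1) k hc1)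
        · intro h
          exact Or.inl ((double_eq_iff ht c k hc).mpr h)
      rw [this]
      exact Set.ncard_pair (by simp [htne])
    · have : {k : ZMod (2*t) | 2*k = c ∨ 2*k = c + 1}
          = {(((c+1).val/2 : ℕ) : ZMod (2*t)), (((c+1).val/2 : ℕ) : ZMod (2*t)) + (t : ZMod (2*t))} := by
        ext k
        simp only [mem_setOf_eq, mem_insert_iff, mem_singleton_iff]
        constructor
        · rintro (h | h)
          · exact absurd h (double_ne ht c k hc)
          · exact (double_eq_iff ht (c+1) k hc1).mp h
        · intro h
          exact Or.inr ((double_eq_iff ht (c+1) k hc1).mpr h)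
      rw [this]
      exact Set.ncard_pair (by simp [htne])
  · -- m odd
    have hcop : Nat.Coprime 2 m := Nat.coprime_two_left.mpr ho
    have hu : IsUnit (2 : ZMod m) := by
      have := (ZMod.isUnit_iff_coprime 2 m).mpr hcop
      simpa using this
    obtain ⟨u, hu⟩ := hu
    have hne : c ≠ c + 1 := by
      intro h
      have : (0 : ZMod m) = 1 := by linear_combination h
      exact zero_ne_one this
    have : {k : ZMod m | 2*k = c ∨ 2*k = c + 1} = {(↑u⁻¹ * c : ZMod m), ↑u⁻¹ * (c+1)} := by
      ext k
      simp only [mem_setOf_eq, mem_insert_iff, mem_singleton_iff]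
      rw [← hu, ← Units.eq_inv_mul_iff_mul_eq, ← Units.eq_inv_mul_iff_mul_eq]
    rw [this]
    refine Set.ncard_pair ?_
    intro h
    have h2 := congrArg (fun w => (u : ZMod m) * w) h
    simp only [Units.mul_inv_cancel_left] at h2
    exact hne h2


section Orbit
variable {X : Type*} [Fintype X] (f : Equiv.Perm X) (x : X)

lemma mem_periodic : x ∈ Function.periodicPts ⇑f := by
  refine ⟨orderOf f, orderOf_pos f, ?_⟩
  show (⇑f)^[orderOf f] x = x
  rw [← Equiv.Perm.coe_pow, pow_orderOf_eq_one]
  rfl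

lemma zpow_fix_iff (n : ℤ) :
    (f ^ n) x = x ↔ ((Function.minimalPeriod ⇑f x : ℤ)) ∣ n := by
  set m := Function.minimalPeriod ⇑f x with hmdef
  have hm : 0 < m := Function.minimalPeriod_pos_of_mem_periodicPts (mem_periodic f x)
  have hmfix : (f ^ (m : ℤ)) x = x := by
    rw [zpow_natCast]
    show (⇑(f ^ m)) x = x
    rw [Equiv.Perm.coe_pow]
    exact Function.iterate_minimalPeriod
  have hfix_mul : ∀ q : ℤ, (f ^ ((m : ℤ) * q)) x = x := by
    intro q
    rw [zpow_mul]
    exact (Function.IsFixedPt.perm_zpow hmfix q)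
  constructor
  · intro h
    have h2 : (f ^ (n % (m:ℤ))) x = x := by
      calc (f ^ (n % (m:ℤ))) x = (f ^ (n % (m:ℤ))) ((f ^ ((m:ℤ) * (n / (m:ℤ)))) x) := by
            rw [hfix_mul]
        _ = (f ^ (n % (m:ℤ) + (m:ℤ) * (n / (m:ℤ)))) x := by
            rw [zpow_add, Equiv.Perm.mul_apply]
        _ = (f ^ n) x := by rw [Int.emod_add_mul_ediv]
        _ = x := h
    have h0 : 0 ≤ n % (m:ℤ) := Int.emod_nonneg n (by exact_mod_cast hm.ne')
    have hlt : n % (m:ℤ) < m := Int.emod_lt_of_pos n (by exact_mod_cast hm)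
    set k := (n % (m:ℤ)).toNat with hk
    have hkc : (k : ℤ) = n % (m:ℤ) := Int.toNat_of_nonneg h0
    have hper : Function.IsPeriodicPt ⇑f k x := by
      show (⇑f)^[k] x = x
      rw [← Equiv.Perm.coe_pow]
      show (f ^ k) x = x
      rw [← zpow_natCast, hkc]
      exact h2
    have hdvd : m ∣ k := hper.minimalPeriod_dvd
    have hklt : k < m := by omega
    have hk0 : k = 0 := Nat.eq_zero_of_dvd_of_lt hdvd hklt
    have hz : n % (m:ℤ) = 0 := by omega
    exact Int.dvd_of_emod_eq_zero hz
  · rintro ⟨q, rfl⟩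
    exact hfix_mul q

lemma zpow_eq_zpow_iff (n n' : ℤ) :
    (f ^ n) x = (f ^ n') x ↔
      ((n : ZMod (Function.minimalPeriod ⇑f x)) = (n' : ZMod (Function.minimalPeriod ⇑f x))) := by
  set m := Function.minimalPeriod ⇑f x with hmdef
  have step : (f ^ n) x = (f ^ n') x ↔ (f ^ (n - n')) x = x := by
    constructor
    · intro h
      have h2 := congrArg (fun w => (f ^ (-n')) w) h
      rwa [← Equiv.Perm.mul_apply, ← Equiv.Perm.mul_apply, ← zpow_add, ← zpow_add,
        neg_add_cancel, zpow_zero, Equiv.Perm.one_apply, add_comm, ← sub_eq_add_neg] at h2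
    · intro h
      have h2 := congrArg (fun w => (f ^ n') w) h
      rwa [← Equiv.Perm.mul_apply, ← zpow_add, add_sub_cancel] at h2
  rw [step, zpow_fix_iff, ZMod.intCast_eq_intCast_iff]
  constructor
  · intro h
    exact Int.modEq_iff_dvd.mpr (by rw [show n' - n = -(n - n') by ring]; exact dvd_neg.mpr h)
  · intro h
    exact Int.ModEq.dvd h.symm

end Orbit


/-- For every ir class `C`, exactly one of the following holds:
(a) `C` is a singleton `{x}` with `i x = x` and `r x = x`;
(b) `C` has at least two elements and exactly two elements `z ∈ C` satisfy
    `i z = z` or `r z = z`;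
(c) no element of `C` is fixed by `i` or by `r`, and the cardinality of `C` is even. -/
theorem ir_class_trichotomy {X : Type*} [Fintype X] (i r : X → X)
    (hi : Function.Involutive i) (hr : Function.Involutive r)
    (C : Set X) (hC : ∃ x, C = irClass i r x) :
    ((∃ x, C = {x} ∧ i x = x ∧ r x = x) ∧
      ¬(2 ≤ C.ncard ∧ ({z ∈ C | i z = z ∨ r z = z}).ncard = 2) ∧
      ¬((∀ z ∈ C, i z ≠ z ∧ r z ≠ z) ∧ Even C.ncard)) ∨
    (¬(∃ x, C = {x} ∧ i x = x ∧ r x = x) ∧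
      (2 ≤ C.ncard ∧ ({z ∈ C | i z = z ∨ r z = z}).ncard = 2) ∧
      ¬((∀ z ∈ C, i z ≠ z ∧ r z ≠ z) ∧ Even C.ncard)) ∨
    (¬(∃ x, C = {x} ∧ i x = x ∧ r x = x) ∧
      ¬(2 ≤ C.ncard ∧ ({z ∈ C | i z = z ∨ r z = z}).ncard = 2) ∧
      ((∀ z ∈ C, i z ≠ z ∧ r z ≠ z) ∧ Even C.ncard)) := by
  obtain ⟨x, rfl⟩ := hC
  set f := irf hi hr with hfdef
  set m := Function.minimalPeriod ⇑f x with hmdef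
  have hm : 0 < m := Function.minimalPeriod_pos_of_mem_periodicPts (mem_periodic f x)
  haveI : NeZero m := ⟨hm.ne'⟩
  set Sx : Set X := {y | f.SameCycle x y} with hSxdef
  set Six : Set X := {y | f.SameCycle (i x) y} with hSixdef
  have hC2 : irClass i r x = Sx ∪ Six := irClass_eq hi hr x
  set φ : ZMod m → X := fun k => (f ^ ((k.val : ℤ))) x with hφ
  have hcast : ∀ k : ZMod m, (((k.val : ℤ)) : ZMod m) = k := by
    intro k
    push_cast
    exact zmod_natCast_val' k
  have hφinj : Function.Injective φ := by
    intro k k' h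
    have h2 := (zpow_eq_zpow_iff f x _ _).mp h
    rwa [hcast, hcast] at h2
  have hφspec : ∀ n : ℤ, (f ^ n) x = φ ((n : ZMod m)) := by
    intro n
    apply (zpow_eq_zpow_iff f x _ _).mpr
    rw [hcast]
  have hSxr : Sx = Set.range φ := by
    ext y
    constructor
    · rintro ⟨n, rfl⟩
      exact ⟨(n : ZMod m), (hφspec n).symm⟩
    · rintro ⟨k, rfl⟩
      exact ⟨(k.val : ℤ), rfl⟩
  have hSxcard : Sx.ncard = m := by
    rw [hSxr, ← Nat.card_coe_set_eq, Nat.card_range_of_injective hφinj, Nat.card_zmod]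
  by_cases hxy : f.SameCycle x (i x)
  · -- equal orbits
    have hSeq : Six = Sx := by
      ext y
      exact ⟨fun h => hxy.trans h, fun h => hxy.symm.trans h⟩
    have hCS : irClass i r x = Sx := by rw [hC2, hSeq, Set.union_self]
    obtain ⟨a, ha⟩ := hxy
    have hra : r x = (f ^ (a + 1)) x := by
      rw [rx_eq hi hr x, ← ha, show a + 1 = 1 + a by ring, zpow_add, zpow_one,
        Equiv.Perm.mul_apply]
    have hik : ∀ k : ZMod m, i (φ k) = (f ^ (a - (k.val : ℤ))) x := by
      intro k
      show i ((f ^ ((k.val : ℤ))) x) = _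
      rw [conj_i hi hr, ← ha, ← Equiv.Perm.mul_apply, ← zpow_add,
        show -(k.val : ℤ) + a = a - (k.val : ℤ) by ring]
    have hrk : ∀ k : ZMod m, r (φ k) = (f ^ ((a + 1) - (k.val : ℤ))) x := by
      intro k
      show r ((f ^ ((k.val : ℤ))) x) = _
      rw [conj_r hi hr, hra, ← Equiv.Perm.mul_apply, ← zpow_add,
        show -(k.val : ℤ) + (a + 1) = (a + 1) - (k.val : ℤ) by ring]
    have hifix : ∀ k : ZMod m, (i (φ k) = φ k ↔ 2 * k = ((a : ZMod m))) := by
      intro k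
      rw [hik k]
      rw [show φ k = (f ^ ((k.val : ℤ))) x from rfl]
      rw [zpow_eq_zpow_iff f x]
      constructor
      · intro h
        push_cast at h
        rw [zmod_natCast_val'] at h
        linear_combination -h
      · intro h
        push_cast
        rw [zmod_natCast_val']
        linear_combination -h
    have hrfix : ∀ k : ZMod m, (r (φ k) = φ k ↔ 2 * k = ((a : ZMod m)) + 1) := by
      intro k
      rw [hrk k]
      rw [show φ k = (f ^ ((k.val : ℤ))) x from rfl]
      rw [zpow_eq_zpow_iff f x]
      constructor
      · intro h
        push_cast at h
        rw [zmod_natCast_val'] at h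
        linear_combination -h
      · intro h
        push_cast
        rw [zmod_natCast_val']
        linear_combination -h
    have hFeq : {z ∈ irClass i r x | i z = z ∨ r z = z}
        = φ '' {k : ZMod m | 2 * k = ((a : ZMod m)) ∨ 2 * k = ((a : ZMod m)) + 1} := by
      ext z
      constructor
      · rintro ⟨hz, hfix⟩
        rw [hCS, hSxr] at hz
        obtain ⟨k, rfl⟩ := hz
        refine ⟨k, ?_, rfl⟩
        rcases hfix with h | h
        · exact Or.inl ((hifix k).mp h)
        · exact Or.inr ((hrfix k).mp h)
      · rintro ⟨k, hk, rfl⟩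
        refine ⟨by rw [hCS, hSxr]; exact ⟨k, rfl⟩, ?_⟩
        rcases hk with h | h
        · exact Or.inl ((hifix k).mpr h)
        · exact Or.inr ((hrfix k).mpr h)
    rcases Nat.lt_or_ge m 2 with hm2 | hm2
    · -- m = 1 : singleton class
      have hm1 : m = 1 := by omega
      have hall : ∀ n : ℤ, (f ^ n) x = x := by
        intro n
        apply (zpow_fix_iff f x n).mpr
        rw [← hmdef, hm1]
        exact one_dvd n
      have hix : i x = x := by rw [← ha]; exact hall a
      have hrx : r x = x := by rw [hra]; exact hall (a + 1)
      have hCsing : irClass i r x = {x} := by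
        rw [hCS]
        ext y
        simp only [Set.mem_singleton_iff]
        constructor
        · rintro ⟨n, rfl⟩
          exact hall n
        · rintro rfl
          exact ⟨0, by simp⟩
      left
      refine ⟨⟨x, hCsing, hix, hrx⟩, ?_, ?_⟩
      · rintro ⟨h2, -⟩
        rw [hCsing, Set.ncard_singleton] at h2
        omega
      · rintro ⟨hall', -⟩
        exact (hall' x (by rw [hCsing]; exact Set.mem_singleton x)).1 hix
    · -- m ≥ 2 : case (b)
      have hF : ({z ∈ irClass i r x | i z = z ∨ r z = z}).ncard = 2 := by
        rw [hFeq, Set.ncard_image_of_injective _ hφinj]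
        exact sol_ncard hm2 _
      have hcard : (irClass i r x).ncard = m := by rw [hCS, hSxcard]
      right; left
      refine ⟨?_, ⟨by rw [hcard]; exact hm2, hF⟩, ?_⟩
      · rintro ⟨y, hy, -, -⟩
        rw [hy, Set.ncard_singleton] at hcard
        omega
      · rintro ⟨hall', -⟩
        have hne : ({z ∈ irClass i r x | i z = z ∨ r z = z}).Nonempty :=
          Set.nonempty_of_ncard_ne_zero (by rw [hF]; norm_num)
        obtain ⟨z, hz, hfix⟩ := hne
        rcases hfix with h | h
        · exact (hall' z hz).1 h
        · exact (hall' z hz).2 h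
  · -- disjoint orbits : case (c)
    have hdisj : Disjoint Sx Six := by
      rw [Set.disjoint_left]
      intro z hz1 hz2
      exact hxy (hz1.trans hz2.symm)
    have hSix : Six = i '' Sx := by
      ext y
      constructor
      · rintro ⟨n, rfl⟩
        refine ⟨(f ^ (-n)) x, ⟨-n, rfl⟩, ?_⟩
        rw [conj_i hi hr (-n) x, neg_neg]
      · rintro ⟨z, ⟨n, rfl⟩, rfl⟩
        exact ⟨-n, (conj_i hi hr n x).symm⟩
    have hSixcard : Six.ncard = m := by
      rw [hSix, Set.ncard_image_of_injective _ hi.injective, hSxcard]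
    have hnofix : ∀ z ∈ irClass i r x, i z ≠ z ∧ r z ≠ z := by
      intro z hz
      rw [hC2] at hz
      constructor
      · intro hfix
        rcases hz with ⟨n, rfl⟩ | ⟨n, rfl⟩
        · have hmem : i ((f ^ n) x) ∈ Six := ⟨-n, (conj_i hi hr n x).symm⟩
          rw [hfix] at hmem
          exact Set.disjoint_left.mp hdisj ⟨n, rfl⟩ hmem
        · have hmem : i ((f ^ n) (i x)) ∈ Sx := by
            refine ⟨-n, ?_⟩
            rw [conj_i hi hr n (i x), hi]
          rw [hfix] at hmem
          exact Set.disjoint_left.mp hdisj hmem ⟨n, rfl⟩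
      · intro hfix
        rcases hz with ⟨n, rfl⟩ | ⟨n, rfl⟩
        · have hmem : r ((f ^ n) x) ∈ Six := by
            refine ⟨-n + 1, ?_⟩
            rw [conj_r hi hr n x, rx_eq hi hr x, zpow_add, zpow_one, Equiv.Perm.mul_apply]
          rw [hfix] at hmem
          exact Set.disjoint_left.mp hdisj ⟨n, rfl⟩ hmem
        · have hmem : r ((f ^ n) (i x)) ∈ Sx := by
            refine ⟨-n + 1, ?_⟩
            rw [conj_r hi hr n (i x), show r (i x) = f x from rfl, zpow_add, zpow_one,
              Equiv.Perm.mul_apply]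
          rw [hfix] at hmem
          exact Set.disjoint_left.mp hdisj hmem ⟨n, rfl⟩
    have hcard : (irClass i r x).ncard = 2 * m := by
      rw [hC2, Set.ncard_union_eq hdisj (Set.toFinite _) (Set.toFinite _), hSxcard, hSixcard]
      ring
    right; right
    refine ⟨?_, ?_, hnofix, ?_⟩
    · rintro ⟨y, hy, hiy, -⟩
      have hymem : y ∈ irClass i r x := by rw [hy]; exact Set.mem_singleton y
      exact (hnofix y hymem).1 hiy
    · rintro ⟨-, hF2⟩
      have hne : ({z ∈ irClass i r x | i z = z ∨ r z = z}).Nonempty :=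
        Set.nonempty_of_ncard_ne_zero (by rw [hF2]; norm_num)
      obtain ⟨z, hz, hfix⟩ := hne
      rcases hfix with h | h
      · exact (hnofix z hz).1 h
      · exact (hnofix z hz).2 h
    · rw [hcard]
      exact ⟨m, by ring⟩
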